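/- Let K be a field and F/K a Galois extension of degree 3 such that every proper finite separable extension of K (inside a fixed separable closure) contains F. Then the Galois group of any finite Galois extension of K is cyclic of order a power of 3. -/

import Mathlib

/-- Let `F/K` be a Galois extension of degree 3 such that every
proper finite separable extension of `K` contains (a copy of) `F`.  Then the
Galois group of any finite Galois extension of `K` is cyclic of 3-power order. -/
theorem stmt5 (K F : Type) [Field K] [Field F] [Algebra K F] [IsGalois K F]
    (h3 : Module.finrank K F = 3)
    (hmin : ∀ (L : Type) [Field L] [Algebra K L] [FiniteDimensional K L]
      [Algebra.IsSeparable K L], Module.finrank K L ≠ 1 → Nonempty (F →ₐ[K] L)) :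
    ∀ (M : Type) [Field M] [Algebra K M] [FiniteDimensional K M] [IsGalois K M],
      IsCyclic (M ≃ₐ[K] M) ∧ ∃ n : ℕ, Nat.card (M ≃ₐ[K] M) = 3 ^ n := by
  intro M _ _ _ _
  classical
  rcases eq_or_ne (Module.finrank K M) 1 with h1 | h1
  · have hc : Nat.card (M ≃ₐ[K] M) = 1 := by
      rw [IsGalois.card_aut_eq_finrank, h1]
    have : Subsingleton (M ≃ₐ[K] M) := Nat.card_eq_one_iff_unique.mp hc |>.1
    exact ⟨isCyclic_of_subsingleton, 0, by simpa using hc⟩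
  · obtain ⟨f⟩ := hmin M h1
    set F1 : IntermediateField K M := f.fieldRange with hF1def
    let e1 : F ≃ₐ[K] F1 := AlgEquiv.ofInjectiveField f
    haveI hF1n : Normal K F1 := Normal.of_algEquiv e1
    have hF1rank : Module.finrank K F1 = 3 := by
      rw [← h3]; exact e1.symm.toLinearEquiv.finrank_eq
    have huniq : ∀ g : F →ₐ[K] M, g.fieldRange = F1 := by
      intro g
      have h2 : (g.comp e1.symm.toAlgHom).fieldRange = F1 :=
        AlgHom.fieldRange_of_normal _
      have hr : (g.comp e1.symm.toAlgHom).fieldRange = g.fieldRange := by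
        ext x
        simp only [AlgHom.mem_fieldRange, AlgHom.comp_apply]
        constructor
        · rintro ⟨y, rfl⟩; exact ⟨e1.symm y, rfl⟩
        · rintro ⟨y, rfl⟩; exact ⟨e1 y, by simp⟩
      rw [← hr, h2]
    set N := F1.fixingSubgroup with hNdef
    have hkey : ∀ H : Subgroup (M ≃ₐ[K] M), H ≠ ⊤ → H ≤ N := by
      intro H hH
      set E := IntermediateField.fixedField H with hEdef
      have hE1 : Module.finrank K E ≠ 1 := by
        intro hone
        apply hH
        rw [← IntermediateField.fixingSubgroup_fixedField H, ← hEdef,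
          IntermediateField.finrank_eq_one_iff.mp hone,
          IntermediateField.fixingSubgroup_bot]
      haveI : Algebra.IsSeparable K E :=
        Algebra.isSeparable_tower_bot_of_isSeparable K E M
      obtain ⟨g⟩ := hmin E hE1
      have hle : F1 ≤ E := by
        rw [← huniq (E.val.comp g)]
        rintro x ⟨y, rfl⟩
        exact (g y).2
      exact (IntermediateField.le_iff_le H F1).mp hle
    have hcardN : Fintype.card N = Module.finrank F1 M :=
      by rw [← Nat.card_eq_fintype_card]; exact IsGalois.card_fixingSubgroup_eq_finrank F1
    have hNindex : N.index = 3 := by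
      have h5 : N.index * Nat.card N = Nat.card (M ≃ₐ[K] M) := Subgroup.index_mul_card N
      have h6 : Nat.card (M ≃ₐ[K] M) = Module.finrank K M := by
        rw [IsGalois.card_aut_eq_finrank]
      have h7 : Module.finrank K F1 * Module.finrank F1 M = Module.finrank K M :=
        Module.finrank_mul_finrank K F1 M
      have h8 : Nat.card N = Module.finrank F1 M := by
        rw [Nat.card_eq_fintype_card, hcardN]
      have h9 : 0 < Module.finrank F1 M := Module.finrank_pos
      have h10 : N.index * Nat.card N = 3 * Nat.card N := by
        rw [h5, h6, ← h7, hF1rank, h8]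
      exact Nat.eq_of_mul_eq_mul_right (h8 ▸ h9) h10
    obtain ⟨g, hg⟩ : ∃ g : M ≃ₐ[K] M, g ∉ N := by
      by_contra h
      push_neg at h
      have : N = ⊤ := top_le_iff.mp fun x _ => h x
      rw [this, Subgroup.index_top] at hNindex
      norm_num at hNindex
    have hzt : Subgroup.zpowers g = ⊤ := by
      by_contra hne
      exact hg (hkey _ hne (Subgroup.mem_zpowers g))
    refine ⟨⟨g, fun x => ?_⟩, ?_⟩
    · show x ∈ Subgroup.zpowers g
      rw [hzt]; exact Subgroup.mem_top x
    haveI : Fact (Nat.Prime 3) := ⟨by norm_num⟩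
    obtain ⟨P⟩ : Nonempty (Sylow 3 (M ≃ₐ[K] M)) := inferInstance
    have hPtop : P.toSubgroup = ⊤ := by
      by_contra hne
      have hd : N.index ∣ (P.toSubgroup).index := Subgroup.index_dvd_of_le (hkey _ hne)
      rw [hNindex] at hd
      exact P.not_dvd_index hd
    have hpg : IsPGroup 3 (M ≃ₐ[K] M) := by
      have := P.2
      rw [hPtop] at this
      exact this.of_equiv Subgroup.topEquiv
    exact IsPGroup.iff_card.mp hpg
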